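/- Let E : ℝ×ℝ → ℝ be C³, bounded together with its partial derivatives up to order three, and let (x(t), v(t)) solve x'(t) = v(t), v'(t) = E(x(t), t), x(T) = x₀, v(T) = v₀ on [T−h₀, T]. Write D(t) = (d/dt) E(x(t), t) for the derivative of the field along the characteristic. Fix C₀ > 0 and suppose for each 0 < h ≤ h₀ numbers Ẽ(h), Ẽ⁻(h), D̃⁺(h), D̃⁻(h) satisfy |Ẽ(h) − E(x₀, T)| ≤ C₀·h³, |Ẽ⁻(h) − E(x(T−h), T−h)| ≤ C₀·h³, |D̃⁺(h) − D(T)| ≤ C₀·h³, and |D̃⁻(h) − D(T−h)| ≤ C₀·h³. Define the third-order approximations x⁽³⁾ = x₀ − v₀·h + (h²/2)·((2/3)·Ẽ(h) + (1/3)·Ẽ⁻(h)) and v⁽³⁾ = v₀ − Ẽ(h)·h + (h²/2)·((2/3)·D̃⁺(h) + (1/3)·D̃⁻(h)). Then there exists C > 0 such that for all 0 < h ≤ h₀, |x(T−h) − x⁽³⁾| ≤ C·h⁴ and |v(T−h) − v⁽³⁾| ≤ C·h⁴. -/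

import Mathlib

open Set

lemma cdo_step {f : ℝ → ℝ} {s : Set ℝ} (hs : UniqueDiffOn ℝ s) {n : ℕ}
    (hd : DifferentiableOn ℝ f s) (h : ContDiffOn ℝ n (derivWithin f s) s) :
    ContDiffOn ℝ (n + 1) f s := by
  have := (contDiffOn_succ_iff_derivWithin (n := n) hs).mpr ⟨hd, by simp, h⟩
  exact_mod_cast this

lemma cdo_step' {f : ℝ → ℝ} {s : Set ℝ} (hs : UniqueDiffOn ℝ s) {n : ℕ}
    (h : ContDiffOn ℝ (n + 1) f s) : ContDiffOn ℝ n (derivWithin f s) s := by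
  have : ContDiffOn ℝ ((n : WithTop ℕ∞) + 1) f s := by exact_mod_cast h
  exact ((contDiffOn_succ_iff_derivWithin (n := n) hs).mp this).2.2

lemma ode_taylor (F : ℝ × ℝ → ℝ) (hF : ContDiff ℝ 3 F) (a b : ℝ) (hab : a < b)
    (y w : ℝ → ℝ)
    (hy : ∀ t ∈ Set.Icc a b, HasDerivAt y (w t) t)
    (hw : ∀ t ∈ Set.Icc a b, HasDerivAt w (F (y t, t)) t) :
    ∃ K > 0, ∀ h : ℝ, 0 ≤ h → h ≤ b - a →
      (|y (a + h) - (y a + h * w a + h ^ 2 / 2 * F (y a, a)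
          + h ^ 3 / 6 * deriv (fun s => F (y s, s)) a)| ≤ K * h ^ 4 ∧
       |w (a + h) - (w a + h * F (y a, a) + h ^ 2 / 2 * deriv (fun s => F (y s, s)) a
          + h ^ 3 / 6 * derivWithin (deriv (fun s => F (y s, s))) (Set.Icc a b) a)| ≤ K * h ^ 4 ∧
       |F (y (a + h), a + h) - (F (y a, a) + h * deriv (fun s => F (y s, s)) a)| ≤ K * h ^ 2 ∧
       |deriv (fun s => F (y s, s)) (a + h) - (deriv (fun s => F (y s, s)) a
          + h * derivWithin (deriv (fun s => F (y s, s))) (Set.Icc a b) a)| ≤ K * h ^ 2) := by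
  set J := Set.Icc a b with hJdef
  have uJ : UniqueDiffOn ℝ J := uniqueDiffOn_Icc hab
  have ha : a ∈ J := ⟨le_refl a, le_of_lt hab⟩
  set G : ℝ → ℝ := fun s => F (y s, s) with hGdef
  -- derivative of G
  have hG : ∀ t ∈ J, HasDerivAt G (fderiv ℝ F (y t, t) (w t, 1)) t := by
    intro t ht
    have hφ : HasDerivAt (fun s => (y s, s)) (w t, 1) t := (hy t ht).prodMk (hasDerivAt_id t)
    have hFd : HasFDerivAt F (fderiv ℝ F (y t, t)) (y t, t) :=
      (hF.differentiable (by norm_num)).differentiableAt.hasFDerivAt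
    have h2 := HasFDerivAt.comp_hasDerivAt (f := fun s => (y s, s)) t hFd hφ
    exact h2
  set D : ℝ → ℝ := deriv G with hDdef
  have hDG : ∀ t ∈ J, HasDerivAt G (D t) t := by
    intro t ht
    have := (hG t ht).deriv
    rw [hDdef, this]; exact hG t ht
  -- basic within-derivatives
  have dy : DifferentiableOn ℝ y J := fun t ht => (hy t ht).differentiableAt.differentiableWithinAt
  have dw : DifferentiableOn ℝ w J := fun t ht => (hw t ht).differentiableAt.differentiableWithinAt
  have hdy : ∀ t ∈ J, derivWithin y J t = w t :=
    fun t ht => (hy t ht).hasDerivWithinAt.derivWithin (uJ t ht)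
  have hdw : ∀ t ∈ J, derivWithin w J t = G t :=
    fun t ht => (hw t ht).hasDerivWithinAt.derivWithin (uJ t ht)
  have hdG : ∀ t ∈ J, derivWithin G J t = D t :=
    fun t ht => (hDG t ht).hasDerivWithinAt.derivWithin (uJ t ht)
  have cy : ContinuousOn y J := dy.continuousOn
  have cG : ContinuousOn G J := hF.continuous.comp_continuousOn (cy.prodMk continuousOn_id)
  -- smoothness bootstrap
  have y1 : ContDiffOn ℝ 1 y J := by
    have := cdo_step (n := 0) uJ dy
      ((contDiffOn_zero.mpr dw.continuousOn).congr hdy)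
    exact_mod_cast this
  have w1 : ContDiffOn ℝ 1 w J := by
    have := cdo_step (n := 0) uJ dw ((contDiffOn_zero.mpr cG).congr hdw)
    exact_mod_cast this
  have mkG : ∀ n : ℕ, (n : WithTop ℕ∞) ≤ 3 → ContDiffOn ℝ n y J → ContDiffOn ℝ n G J := by
    intro n hn hyn
    exact (hF.of_le hn).comp_contDiffOn (hyn.prodMk contDiffOn_id)
  have y2 : ContDiffOn ℝ 2 y J := by
    have := cdo_step (n := 1) uJ dy (by exact_mod_cast w1.congr hdy)
    exact_mod_cast this
  have G2 : ContDiffOn ℝ 2 G J := mkG 2 (by norm_num) y2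
  have w3 : ContDiffOn ℝ 3 w J := by
    have := cdo_step (n := 2) uJ dw (by exact_mod_cast G2.congr hdw)
    exact_mod_cast this
  have y4 : ContDiffOn ℝ 4 y J := by
    have := cdo_step (n := 3) uJ dy (by exact_mod_cast w3.congr hdy)
    exact_mod_cast this
  have y3 : ContDiffOn ℝ 3 y J := y4.of_le (by norm_num)
  have G3 : ContDiffOn ℝ 3 G J := mkG 3 (by norm_num) y3
  have w4 : ContDiffOn ℝ 4 w J := by
    have := cdo_step (n := 3) uJ dw (by exact_mod_cast G3.congr hdw)
    exact_mod_cast this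
  have DW2 : ContDiffOn ℝ 2 (derivWithin G J) J := by
    have := cdo_step' (n := 2) uJ (by exact_mod_cast G3)
    exact_mod_cast this
  -- iterated derivative identities
  have hI1y : ∀ t ∈ J, iteratedDerivWithin 1 y J t = w t := fun t ht => by
    rw [iteratedDerivWithin_one, hdy t ht]
  have hI2y : ∀ t ∈ J, iteratedDerivWithin 2 y J t = G t := fun t ht => by
    rw [show (2:ℕ) = 1+1 from rfl, iteratedDerivWithin_succ,
      derivWithin_congr (fun s hs => hI1y s hs) (hI1y t ht), hdw t ht]
  have hI3y : iteratedDerivWithin 3 y J a = D a := by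
    rw [show (3:ℕ) = 2+1 from rfl, iteratedDerivWithin_succ,
      derivWithin_congr (fun s hs => hI2y s hs) (hI2y a ha), hdG a ha]
  have hI1w : ∀ t ∈ J, iteratedDerivWithin 1 w J t = G t := fun t ht => by
    rw [iteratedDerivWithin_one, hdw t ht]
  have hI2w : ∀ t ∈ J, iteratedDerivWithin 2 w J t = D t := fun t ht => by
    rw [show (2:ℕ) = 1+1 from rfl, iteratedDerivWithin_succ,
      derivWithin_congr (fun s hs => hI1w s hs) (hI1w t ht), hdG t ht]
  have hI3w : iteratedDerivWithin 3 w J a = derivWithin D J a := by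
    rw [show (3:ℕ) = 2+1 from rfl, iteratedDerivWithin_succ,
      derivWithin_congr (fun s hs => hI2w s hs) (hI2w a ha)]
  have hI1G : iteratedDerivWithin 1 G J a = D a := by
    rw [iteratedDerivWithin_one, hdG a ha]
  have hI1DW : iteratedDerivWithin 1 (derivWithin G J) J a = derivWithin D J a := by
    rw [iteratedDerivWithin_one,
      derivWithin_congr (fun s hs => hdG s hs) (hdG a ha)]
  -- bounds on high derivatives
  obtain ⟨K1, hK1⟩ := (isCompact_Icc (a := a) (b := b)).exists_bound_of_continuousOn
      (y4.continuousOn_iteratedDerivWithin (m := 4) (by norm_num) uJ)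
  obtain ⟨K2, hK2⟩ := (isCompact_Icc (a := a) (b := b)).exists_bound_of_continuousOn
      (w4.continuousOn_iteratedDerivWithin (m := 4) (by norm_num) uJ)
  obtain ⟨K3, hK3⟩ := (isCompact_Icc (a := a) (b := b)).exists_bound_of_continuousOn
      (G2.continuousOn_iteratedDerivWithin (m := 2) (by norm_num) uJ)
  obtain ⟨K4, hK4⟩ := (isCompact_Icc (a := a) (b := b)).exists_bound_of_continuousOn
      (DW2.continuousOn_iteratedDerivWithin (m := 2) (by norm_num) uJ)
  have hK1' : 0 ≤ K1 := le_trans (norm_nonneg _) (hK1 a ha)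
  have hK2' : 0 ≤ K2 := le_trans (norm_nonneg _) (hK2 a ha)
  have hK3' : 0 ≤ K3 := le_trans (norm_nonneg _) (hK3 a ha)
  have hK4' : 0 ≤ K4 := le_trans (norm_nonneg _) (hK4 a ha)
  refine ⟨K1 + K2 + K3 + K4 + 1, by linarith, ?_⟩
  intro h h0 hhb
  have hmem : a + h ∈ J := ⟨by linarith, by linarith⟩
  have hsub : a + h - a = h := by ring
  have hGa : G a = F (y a, a) := rfl
  have hGah : G (a + h) = F (y (a + h), a + h) := rfl
  have hh4 : (0:ℝ) ≤ h ^ 4 := by positivity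
  have hh2 : (0:ℝ) ≤ h ^ 2 := by positivity
  -- Taylor for y
  have T1 := taylor_mean_remainder_bound (f := y) (n := 3) (le_of_lt hab)
    (by exact_mod_cast y4) hmem (fun t ht => hK1 t ht)
  have hTP1 : taylorWithinEval y 3 J a (a + h)
      = y a + h * w a + h ^ 2 / 2 * G a + h ^ 3 / 6 * D a := by
    rw [taylor_within_apply, Finset.sum_range_succ, Finset.sum_range_succ,
      Finset.sum_range_succ, Finset.sum_range_one]
    simp only [iteratedDerivWithin_zero, hI1y a ha, hI2y a ha, hI3y, smul_eq_mul, hsub]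
    norm_num [Nat.factorial]
    ring
  rw [hTP1, Real.norm_eq_abs, hsub] at T1
  -- Taylor for w
  have T2 := taylor_mean_remainder_bound (f := w) (n := 3) (le_of_lt hab)
    (by exact_mod_cast w4) hmem (fun t ht => hK2 t ht)
  have hTP2 : taylorWithinEval w 3 J a (a + h)
      = w a + h * G a + h ^ 2 / 2 * D a + h ^ 3 / 6 * derivWithin D J a := by
    rw [taylor_within_apply, Finset.sum_range_succ, Finset.sum_range_succ,
      Finset.sum_range_succ, Finset.sum_range_one]
    simp only [iteratedDerivWithin_zero, hI1w a ha, hI2w a ha, hI3w, smul_eq_mul, hsub]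
    norm_num [Nat.factorial]
    ring
  rw [hTP2, Real.norm_eq_abs, hsub] at T2
  -- Taylor for G
  have T3 := taylor_mean_remainder_bound (f := G) (n := 1) (le_of_lt hab)
    (by exact_mod_cast G2) hmem (fun t ht => hK3 t ht)
  have hTP3 : taylorWithinEval G 1 J a (a + h) = G a + h * D a := by
    rw [taylor_within_apply, Finset.sum_range_succ, Finset.sum_range_one]
    simp only [iteratedDerivWithin_zero, hI1G, smul_eq_mul, hsub]
    norm_num [Nat.factorial]
  rw [hTP3, Real.norm_eq_abs, hsub] at T3
  -- Taylor for derivWithin G J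
  have T4 := taylor_mean_remainder_bound (f := derivWithin G J) (n := 1) (le_of_lt hab)
    (by exact_mod_cast DW2) hmem (fun t ht => hK4 t ht)
  have hTP4 : taylorWithinEval (derivWithin G J) 1 J a (a + h)
      = D a + h * derivWithin D J a := by
    rw [taylor_within_apply, Finset.sum_range_succ, Finset.sum_range_one]
    simp only [iteratedDerivWithin_zero, hI1DW, smul_eq_mul, hsub]
    norm_num [Nat.factorial]
    rw [hdG a ha]
  rw [hTP4, Real.norm_eq_abs, hsub, hdG _ hmem] at T4
  norm_num [Nat.factorial] at T1 T2 T3 T4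
  have hb1 : K1 / 6 * h ^ 4 ≤ (K1 + K2 + K3 + K4 + 1) * h ^ 4 :=
    mul_le_mul_of_nonneg_right (by linarith) hh4
  have hb2 : K2 / 6 * h ^ 4 ≤ (K1 + K2 + K3 + K4 + 1) * h ^ 4 :=
    mul_le_mul_of_nonneg_right (by linarith) hh4
  have hb3 : K3 * h ^ 2 ≤ (K1 + K2 + K3 + K4 + 1) * h ^ 2 :=
    mul_le_mul_of_nonneg_right (by linarith) hh2
  have hb4 : K4 * h ^ 2 ≤ (K1 + K2 + K3 + K4 + 1) * h ^ 2 :=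
    mul_le_mul_of_nonneg_right (by linarith) hh2
  refine ⟨?_, ?_, ?_, ?_⟩
  · rw [← hGa]; linarith
  · rw [← hGa]; linarith
  · rw [← hGa, ← hGah]; linarith
  · linarith

set_option maxHeartbeats 1000000 in
/-- Third-order two-stage multi-derivative predictor-corrector characteristic tracing for
the backward problem `x' = v`, `v' = E(x, t)`, `x T = x₀`, `v T = v₀` is locally
fourth-order accurate, provided the predicted values `Ẽ(h)`, `Ẽ⁻(h)` of the field at
times `T`, `T−h` and the predicted values `D̃⁺(h)`, `D̃⁻(h)` of the material derivative
`D(t) = (d/dt) E(x(t), t)` at times `T`, `T−h` are all `O(h³)` accurate. -/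
theorem third_order_characteristic_tracing
    (E : ℝ × ℝ → ℝ) (hE : ContDiff ℝ 3 E)
    (M : ℝ) (hM : ∀ i : ℕ, i ≤ 3 → ∀ p : ℝ × ℝ, ‖iteratedFDeriv ℝ i E p‖ ≤ M)
    (T h₀ x₀ v₀ : ℝ) (hh₀ : 0 < h₀)
    (x v : ℝ → ℝ)
    (hx : ∀ t ∈ Set.Icc (T - h₀) T, HasDerivAt x (v t) t)
    (hv : ∀ t ∈ Set.Icc (T - h₀) T, HasDerivAt v (E (x t, t)) t)
    (hxT : x T = x₀) (hvT : v T = v₀)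
    (C₀ : ℝ) (hC₀ : 0 < C₀)
    (Etilde Etilde' Dtilde Dtilde' : ℝ → ℝ)
    (hEtilde : ∀ h : ℝ, 0 < h → h ≤ h₀ → |Etilde h - E (x₀, T)| ≤ C₀ * h ^ 3)
    (hEtilde' : ∀ h : ℝ, 0 < h → h ≤ h₀ →
      |Etilde' h - E (x (T - h), T - h)| ≤ C₀ * h ^ 3)
    (hDtilde : ∀ h : ℝ, 0 < h → h ≤ h₀ →
      |Dtilde h - deriv (fun s => E (x s, s)) T| ≤ C₀ * h ^ 3)
    (hDtilde' : ∀ h : ℝ, 0 < h → h ≤ h₀ →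
      |Dtilde' h - deriv (fun s => E (x s, s)) (T - h)| ≤ C₀ * h ^ 3) :
    ∃ C > 0, ∀ h : ℝ, 0 < h → h ≤ h₀ →
      |x (T - h) - (x₀ - v₀ * h + h ^ 2 / 2 * (2 / 3 * Etilde h + 1 / 3 * Etilde' h))|
        ≤ C * h ^ 4 ∧
      |v (T - h) - (v₀ - Etilde h * h + h ^ 2 / 2 * (2 / 3 * Dtilde h + 1 / 3 * Dtilde' h))|
        ≤ C * h ^ 4 := by
  have hab : T < T + h₀ := by linarith
  have hg : ∀ t ∈ Set.Icc (T - h₀) T,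
      HasDerivAt (fun s => E (x s, s)) (fderiv ℝ E (x t, t) (v t, 1)) t := by
    intro t ht
    have hφ : HasDerivAt (fun s => (x s, s)) (v t, 1) t := (hx t ht).prodMk (hasDerivAt_id t)
    have hFd : HasFDerivAt E (fderiv ℝ E (x t, t)) (x t, t) :=
      (hE.differentiable (by norm_num)).differentiableAt.hasFDerivAt
    have h2 := HasFDerivAt.comp_hasDerivAt (f := fun s => (x s, s)) t hFd hφ
    exact h2
  have hF' : ContDiff ℝ 3 (fun p : ℝ × ℝ => E (p.1, 2*T - p.2)) :=
    hE.comp (contDiff_fst.prodMk (contDiff_const.sub contDiff_snd))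
  have hr : ∀ s : ℝ, HasDerivAt (fun u : ℝ => 2*T - u) (-1) s := fun s => by
    simpa using (hasDerivAt_id s).const_sub (2*T)
  have hmm : ∀ s ∈ Set.Icc T (T + h₀), 2*T - s ∈ Set.Icc (T - h₀) T := by
    intro s hs; exact ⟨by linarith [hs.2], by linarith [hs.1]⟩
  have hy : ∀ s ∈ Set.Icc T (T + h₀),
      HasDerivAt (fun u => x (2*T - u)) (-v (2*T - s)) s := by
    intro s hs
    have h2 := (hx _ (hmm s hs)).comp s (hr s)
    simpa [Function.comp_def, mul_neg_one] using h2
  have hw : ∀ s ∈ Set.Icc T (T + h₀),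
      HasDerivAt (fun u => -v (2*T - u)) (E (x (2*T - s), 2*T - s)) s := by
    intro s hs
    have h2 := ((hv _ (hmm s hs)).comp s (hr s)).neg
    simp only [Function.comp_def, mul_neg_one, neg_neg] at h2
    exact h2
  obtain ⟨K, hK0, hKsp⟩ := ode_taylor (fun p : ℝ × ℝ => E (p.1, 2*T - p.2)) hF' T (T + h₀)
    hab (fun u => x (2*T - u)) (fun u => -v (2*T - u)) hy hw
  -- derivative of the reflected field composition
  have hGder : ∀ s ∈ Set.Icc T (T + h₀),
      HasDerivAt (fun u => E (x (2*T - u), 2*T - u))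
        (-(fderiv ℝ E (x (2*T - s), 2*T - s) (v (2*T - s), 1))) s := by
    intro s hs
    have h2 := (hg _ (hmm s hs)).comp s (hr s)
    simpa [Function.comp_def, mul_neg_one] using h2
  have hgd : ∀ t ∈ Set.Icc (T - h₀) T,
      deriv (fun s => E (x s, s)) t = fderiv ℝ E (x t, t) (v t, 1) :=
    fun t ht => (hg t ht).deriv
  have c2 : 2*T - T = T := by ring
  have hDTeq : deriv (fun u => E (x (2*T - u), 2*T - u)) T
      = - deriv (fun s => E (x s, s)) T := by
    have hs : T ∈ Set.Icc T (T + h₀) := ⟨le_refl _, by linarith⟩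
    have h1 := (hGder T hs).deriv
    rw [c2] at h1
    rw [h1, hgd T ⟨by linarith, le_refl T⟩]
  refine ⟨2*K + C₀*h₀ + C₀ + 1, by nlinarith, ?_⟩
  intro h hh hle
  obtain ⟨B1, B2, B3, B4⟩ := hKsp h hh.le (by linarith)
  have c1 : 2*T - (T + h) = T - h := by ring
  have hDheq : deriv (fun u => E (x (2*T - u), 2*T - u)) (T + h)
      = - deriv (fun s => E (x s, s)) (T - h) := by
    have hs : T + h ∈ Set.Icc T (T + h₀) := ⟨by linarith, by linarith⟩
    have h1 := (hGder (T + h) hs).deriv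
    rw [c1] at h1
    rw [h1, hgd (T - h) ⟨by linarith, by linarith⟩]
  simp only [c1, c2, hxT, hvT] at B1 B2 B3 B4
  set P := deriv (fun u => E (x (2*T - u), 2*T - u)) T with hP
  set Q := deriv (fun u => E (x (2*T - u), 2*T - u)) (T + h) with hQ
  set R := derivWithin (deriv (fun u => E (x (2*T - u), 2*T - u))) (Set.Icc T (T + h₀)) T
    with hR
  clear hKsp
  clear_value P Q R
  -- accuracy of the predicted material derivatives in reflected form
  have hE1 := hEtilde h hh hle
  have hE2 := hEtilde' h hh hle
  have hDp : |Dtilde h + P| ≤ C₀ * h ^ 3 := by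
    have h1 := hDtilde h hh hle
    have h2 : Dtilde h + P = Dtilde h - deriv (fun s => E (x s, s)) T := by
      rw [hDTeq]; ring
    rw [h2]; exact h1
  have hDm : |Dtilde' h + Q| ≤ C₀ * h ^ 3 := by
    have h1 := hDtilde' h hh hle
    have h2 : Dtilde' h + Q = Dtilde' h - deriv (fun s => E (x s, s)) (T - h) := by
      rw [hDheq]; ring
    rw [h2]; exact h1
  -- auxiliary positivity facts
  have hh4 : (0:ℝ) ≤ h ^ 4 := by positivity
  have hKh4 : (0:ℝ) ≤ K * h ^ 4 := mul_nonneg hK0.le hh4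
  have h5 : h ^ 5 ≤ h₀ * h ^ 4 := by
    calc h ^ 5 = h * h ^ 4 := by ring
      _ ≤ h₀ * h ^ 4 := mul_le_mul_of_nonneg_right hle hh4
  have h5C : C₀ * h ^ 5 ≤ C₀ * (h₀ * h ^ 4) := mul_le_mul_of_nonneg_left h5 hC₀.le
  have hC5 : (0:ℝ) ≤ C₀ * h ^ 5 := by positivity
  have hC4 : (0:ℝ) ≤ C₀ * h ^ 4 := by positivity
  have tri4 : ∀ p q r s : ℝ, |p + q + r + s| ≤ |p| + |q| + |r| + |s| := by
    intro p q r s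
    calc |p + q + r + s| ≤ |p + q + r| + |s| := abs_add_le _ _
      _ ≤ |p + q| + |r| + |s| := by linarith [abs_add_le (p + q) r]
      _ ≤ |p| + |q| + |r| + |s| := by linarith [abs_add_le p q]
  have tri5 : ∀ p q r s t : ℝ, |p + q + r + s + t| ≤ |p| + |q| + |r| + |s| + |t| := by
    intro p q r s t
    calc |p + q + r + s + t| ≤ |p + q + r + s| + |t| := abs_add_le _ _
      _ ≤ _ := by linarith [tri4 p q r s]
  constructor
  · -- spatial component
    have ex : x (T - h) - (x₀ - v₀ * h + h ^ 2 / 2 * (2 / 3 * Etilde h + 1 / 3 * Etilde' h))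
        = (x (T - h) - (x₀ + h * -v₀ + h ^ 2 / 2 * E (x₀, T) + h ^ 3 / 6 * P))
          + h ^ 2 / 3 * (E (x₀, T) - Etilde h)
          + (-(h ^ 2 / 6 * (Etilde' h - E (x (T - h), T - h))))
          + (-(h ^ 2 / 6 * (E (x (T - h), T - h) - (E (x₀, T) + h * P)))) := by ring
    have q2 : |h ^ 2 / 3 * (E (x₀, T) - Etilde h)| ≤ h ^ 2 / 3 * (C₀ * h ^ 3) := by
      rw [abs_mul, abs_of_nonneg (by positivity : (0:ℝ) ≤ h ^ 2 / 3), abs_sub_comm]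
      exact mul_le_mul_of_nonneg_left hE1 (by positivity)
    have q3 : |(-(h ^ 2 / 6 * (Etilde' h - E (x (T - h), T - h))))|
        ≤ h ^ 2 / 6 * (C₀ * h ^ 3) := by
      rw [abs_neg, abs_mul, abs_of_nonneg (by positivity : (0:ℝ) ≤ h ^ 2 / 6)]
      exact mul_le_mul_of_nonneg_left hE2 (by positivity)
    have q4 : |(-(h ^ 2 / 6 * (E (x (T - h), T - h) - (E (x₀, T) + h * P))))|
        ≤ h ^ 2 / 6 * (K * h ^ 2) := by
      rw [abs_neg, abs_mul, abs_of_nonneg (by positivity : (0:ℝ) ≤ h ^ 2 / 6)]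
      exact mul_le_mul_of_nonneg_left B3 (by positivity)
    have := tri4 (x (T - h) - (x₀ + h * -v₀ + h ^ 2 / 2 * E (x₀, T) + h ^ 3 / 6 * P))
      (h ^ 2 / 3 * (E (x₀, T) - Etilde h))
      (-(h ^ 2 / 6 * (Etilde' h - E (x (T - h), T - h))))
      (-(h ^ 2 / 6 * (E (x (T - h), T - h) - (E (x₀, T) + h * P))))
    rw [← ex] at this
    have hsum : |x (T - h) - (x₀ - v₀ * h
        + h ^ 2 / 2 * (2 / 3 * Etilde h + 1 / 3 * Etilde' h))|
        ≤ K * h ^ 4 + h ^ 2 / 3 * (C₀ * h ^ 3) + h ^ 2 / 6 * (C₀ * h ^ 3)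
          + h ^ 2 / 6 * (K * h ^ 2) := by linarith
    have hfin : K * h ^ 4 + h ^ 2 / 3 * (C₀ * h ^ 3) + h ^ 2 / 6 * (C₀ * h ^ 3)
        + h ^ 2 / 6 * (K * h ^ 2) ≤ (2*K + C₀*h₀ + C₀ + 1) * h ^ 4 := by nlinarith
    linarith
  · -- velocity component
    have ev : v (T - h) - (v₀ - Etilde h * h + h ^ 2 / 2 * (2 / 3 * Dtilde h + 1 / 3 * Dtilde' h))
        = (-((-v (T - h)) - (-v₀ + h * E (x₀, T) + h ^ 2 / 2 * P + h ^ 3 / 6 * R)))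
          + h * (Etilde h - E (x₀, T))
          + (-(h ^ 2 / 3 * (Dtilde h + P)))
          + (-(h ^ 2 / 6 * (Dtilde' h + Q)))
          + h ^ 2 / 6 * (Q - (P + h * R)) := by ring
    have q1 : |(-((-v (T - h)) - (-v₀ + h * E (x₀, T) + h ^ 2 / 2 * P + h ^ 3 / 6 * R)))|
        ≤ K * h ^ 4 := by rw [abs_neg]; exact B2
    have q2 : |h * (Etilde h - E (x₀, T))| ≤ h * (C₀ * h ^ 3) := by
      rw [abs_mul, abs_of_nonneg hh.le]
      exact mul_le_mul_of_nonneg_left hE1 hh.le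
    have q3 : |(-(h ^ 2 / 3 * (Dtilde h + P)))| ≤ h ^ 2 / 3 * (C₀ * h ^ 3) := by
      rw [abs_neg, abs_mul, abs_of_nonneg (by positivity : (0:ℝ) ≤ h ^ 2 / 3)]
      exact mul_le_mul_of_nonneg_left hDp (by positivity)
    have q4 : |(-(h ^ 2 / 6 * (Dtilde' h + Q)))| ≤ h ^ 2 / 6 * (C₀ * h ^ 3) := by
      rw [abs_neg, abs_mul, abs_of_nonneg (by positivity : (0:ℝ) ≤ h ^ 2 / 6)]
      exact mul_le_mul_of_nonneg_left hDm (by positivity)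
    have q5 : |h ^ 2 / 6 * (Q - (P + h * R))| ≤ h ^ 2 / 6 * (K * h ^ 2) := by
      rw [abs_mul, abs_of_nonneg (by positivity : (0:ℝ) ≤ h ^ 2 / 6)]
      exact mul_le_mul_of_nonneg_left B4 (by positivity)
    have := tri5 (-((-v (T - h)) - (-v₀ + h * E (x₀, T) + h ^ 2 / 2 * P + h ^ 3 / 6 * R)))
      (h * (Etilde h - E (x₀, T)))
      (-(h ^ 2 / 3 * (Dtilde h + P)))
      (-(h ^ 2 / 6 * (Dtilde' h + Q)))
      (h ^ 2 / 6 * (Q - (P + h * R)))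
    rw [← ev] at this
    have hsum : |v (T - h) - (v₀ - Etilde h * h
        + h ^ 2 / 2 * (2 / 3 * Dtilde h + 1 / 3 * Dtilde' h))|
        ≤ K * h ^ 4 + h * (C₀ * h ^ 3) + h ^ 2 / 3 * (C₀ * h ^ 3)
          + h ^ 2 / 6 * (C₀ * h ^ 3) + h ^ 2 / 6 * (K * h ^ 2) := by linarith
    have hfin : K * h ^ 4 + h * (C₀ * h ^ 3) + h ^ 2 / 3 * (C₀ * h ^ 3)
        + h ^ 2 / 6 * (C₀ * h ^ 3) + h ^ 2 / 6 * (K * h ^ 2)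
        ≤ (2*K + C₀*h₀ + C₀ + 1) * h ^ 4 := by nlinarith
    linarith
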